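/- Let n = 2^t·p − 1 where t is a positive integer and p is an odd prime, and let a ∈ {1,…,n} be a vertex such that 2^{t−1} does not divide a. Then pretty good state transfer does not occur in P_n between vertices a and n + 1 − a. -/

import Mathlib

open Real Finset

/-- Adjacency matrix of the path `P_n` on vertices `1,…,n` (indexed by `Fin n`),
over the complex numbers: the `(j,k)` entry is `1` iff `|j - k| = 1`. -/
noncomputable def pathAdj (n : ℕ) : Matrix (Fin n) (Fin n) ℂ :=
  Matrix.of fun j k => if j.val + 1 = k.val ∨ k.val + 1 = j.val then 1 else 0

/-- The transition matrix `U(τ) = exp(iτA)` of the quantum walk on `P_n`. -/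
noncomputable def pathU (n : ℕ) (τ : ℝ) : Matrix (Fin n) (Fin n) ℂ :=
  NormedSpace.exp ((Complex.I * (τ : ℂ)) • pathAdj n)

/-- Pretty good state transfer between vertices `a` and `b` of `P_n`
(vertex `a ∈ {1,…,n}` corresponds to index `a - 1 : Fin n`):
for every `ε > 0` there is a time `τ` with `|U(τ)_{a,b}| > 1 - ε`. -/
def PGST (n : ℕ) (a b : Fin n) : Prop :=
  ∀ ε : ℝ, 0 < ε → ∃ τ : ℝ, 1 - ε < ‖pathU n τ a b‖

namespace PGSTaux

noncomputable def ee (N : ℕ) (m : ℤ) : ℂ :=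
  Complex.exp ((m : ℂ) * ((π : ℂ) / (N : ℂ)) * Complex.I)

lemma ee_ne_zero (N : ℕ) (m : ℤ) : ee N m ≠ 0 := Complex.exp_ne_zero _

lemma ee_add (N : ℕ) (m m' : ℤ) : ee N (m + m') = ee N m * ee N m' := by
  rw [ee, ee, ee, ← Complex.exp_add]
  push_cast
  ring_nf

lemma ee_zero (N : ℕ) : ee N 0 = 1 := by simp [ee]

lemma ee_neg (N : ℕ) (m : ℤ) : ee N (-m) = (ee N m)⁻¹ := by
  have h : ee N m * ee N (-m) = 1 := by rw [← ee_add]; simp [ee_zero]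
  field_simp [ee_ne_zero] at h ⊢
  linear_combination h

lemma ee_pow (N : ℕ) (m : ℤ) (j : ℕ) : ee N m ^ j = ee N (m * j) := by
  rw [ee, ee, ← Complex.exp_nat_mul]
  push_cast
  ring_nf

lemma ee_int_pow (N : ℕ) (m c : ℤ) : ee N m ^ c = ee N (m * c) := by
  rw [ee, ee, ← Complex.exp_int_mul]
  push_cast
  ring_nf

lemma ee_N (N : ℕ) (hN : N ≠ 0) : ee N N = -1 := by
  rw [ee]
  have : ((N : ℤ) : ℂ) * ((π : ℂ) / (N : ℂ)) * Complex.I = (π : ℂ) * Complex.I := by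
    have : (N : ℂ) ≠ 0 := Nat.cast_ne_zero.2 hN
    field_simp
    simp
  rw [this, Complex.exp_pi_mul_I]

lemma ee_pow_N (N : ℕ) (hN : N ≠ 0) (c : ℤ) : ee N c ^ N = (-1 : ℂ) ^ c := by
  rw [ee_pow, mul_comm, ← ee_int_pow, ee_N N hN]

lemma ee_eq_one_iff (N : ℕ) (hN : N ≠ 0) (m : ℤ) : ee N m = 1 ↔ (2 * (N : ℤ)) ∣ m := by
  rw [ee, Complex.exp_eq_one_iff]
  constructor
  · rintro ⟨k, hk⟩
    refine ⟨k, ?_⟩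
    have hπ : (π : ℂ) ≠ 0 := by
      simpa using Complex.ofReal_ne_zero.2 Real.pi_ne_zero
    have hNC : (N : ℂ) ≠ 0 := Nat.cast_ne_zero.2 hN
    have hI : Complex.I ≠ 0 := Complex.I_ne_zero
    have key : (m : ℂ) = (2 * (N : ℂ)) * (k : ℂ) := by
      field_simp at hk
      have h2 : (m : ℂ) * (π:ℂ) * Complex.I = (k:ℂ) * (2 * (N:ℂ)) * (π:ℂ) * Complex.I := by
        linear_combination ((π:ℂ) * Complex.I) * hk
      have := mul_right_cancel₀ hI (by linear_combination h2 :
        ((m:ℂ) * (π:ℂ)) * Complex.I = ((k:ℂ) * (2 * (N:ℂ)) * (π:ℂ)) * Complex.I)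
      have := mul_right_cancel₀ hπ this
      linear_combination this
    exact_mod_cast key
  · rintro ⟨k, hk⟩
    refine ⟨k, ?_⟩
    have hNC : (N : ℂ) ≠ 0 := Nat.cast_ne_zero.2 hN
    subst hk
    push_cast
    field_simp

lemma geom_even (N : ℕ) (hN : N ≠ 0) (c : ℤ) (hc : Even c) (h1 : ee N c ≠ 1) :
    ∑ j ∈ Finset.range N, ee N c ^ j = 0 := by
  rw [geom_sum_eq h1, ee_pow_N N hN, hc.neg_one_zpow]
  simp

lemma geom_pair_odd (N : ℕ) (hN : N ≠ 0) (c : ℤ) (hc : Odd c) (h1 : ee N c ≠ 1) :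
    (∑ j ∈ Finset.range N, ee N c ^ j) + (∑ j ∈ Finset.range N, ee N (-c) ^ j) = 2 := by
  have hx0 : ee N c ≠ 0 := ee_ne_zero N c
  have h1' : (ee N c)⁻¹ ≠ 1 := by
    intro h
    apply h1
    have := congrArg (· * ee N c) h
    simpa [inv_mul_cancel₀ hx0] using this.symm
  rw [ee_neg, geom_sum_eq h1, geom_sum_eq h1', ee_pow_N N hN, inv_pow, ee_pow_N N hN,
    hc.neg_one_zpow]
  set x := ee N c with hxdef
  have hx1 : x - 1 ≠ 0 := sub_ne_zero.2 h1
  have hx1' : x⁻¹ - 1 ≠ 0 := sub_ne_zero.2 h1'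
  have hx1'' : (1 : ℂ) - x ≠ 0 := fun h => hx1 (by linear_combination -h)
  field_simp
  ring


lemma sin_eq_ee (N : ℕ) (m : ℤ) :
    Complex.sin ((m : ℂ) * ((π : ℂ) / (N : ℂ))) = (ee N (-m) - ee N m) * Complex.I / 2 := by
  rw [Complex.sin]
  have e1 : Complex.exp (-((m : ℂ) * ((π : ℂ) / (N : ℂ))) * Complex.I) = ee N (-m) := by
    rw [ee]; congr 1; push_cast; ring
  rw [e1]; rfl

lemma cos_eq_ee (N : ℕ) (m : ℤ) :
    Complex.cos ((m : ℂ) * ((π : ℂ) / (N : ℂ))) = (ee N m + ee N (-m)) / 2 := by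
  rw [Complex.cos]
  have e1 : Complex.exp (-((m : ℂ) * ((π : ℂ) / (N : ℂ))) * Complex.I) = ee N (-m) := by
    rw [ee]; congr 1; push_cast; ring
  rw [e1]; rfl

lemma ee_ne_one (N : ℕ) (hN : N ≠ 0) (c : ℤ) (h0 : c ≠ 0) (hlt : |c| < 2 * N) :
    ee N c ≠ 1 := by
  intro h1
  exact h0 (Int.eq_zero_of_abs_lt_dvd ((ee_eq_one_iff N hN c).1 h1) hlt)

lemma orth (N : ℕ) (hN : 0 < N) (a b : ℕ) (ha : 1 ≤ a) (haN : a < N) (hb : 1 ≤ b)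
    (hbN : b < N) :
    ∑ j ∈ Finset.range N,
        Complex.sin ((j : ℂ) * (a : ℂ) * ((π : ℂ) / (N : ℂ))) *
          Complex.sin ((j : ℂ) * (b : ℂ) * ((π : ℂ) / (N : ℂ))) =
      if a = b then (N : ℂ) / 2 else 0 := by
  have hNne : N ≠ 0 := hN.ne'
  have key : ∀ j ∈ Finset.range N,
      Complex.sin ((j : ℂ) * (a : ℂ) * ((π : ℂ) / (N : ℂ))) *
        Complex.sin ((j : ℂ) * (b : ℂ) * ((π : ℂ) / (N : ℂ))) =
      -(1/4 : ℂ) * (ee N (-((a : ℤ) + b)) ^ j - ee N ((b : ℤ) - a) ^ j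
        - ee N ((a : ℤ) - b) ^ j + ee N ((a : ℤ) + b) ^ j) := by
    intro j _
    have ea : Complex.sin ((j : ℂ) * (a : ℂ) * ((π : ℂ) / (N : ℂ)))
        = (ee N (-((j : ℤ) * a)) - ee N ((j : ℤ) * a)) * Complex.I / 2 := by
      rw [← sin_eq_ee]; push_cast; ring_nf
    have eb : Complex.sin ((j : ℂ) * (b : ℂ) * ((π : ℂ) / (N : ℂ)))
        = (ee N (-((j : ℤ) * b)) - ee N ((j : ℤ) * b)) * Complex.I / 2 := by
      rw [← sin_eq_ee]; push_cast; ring_nf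
    rw [ea, eb]
    have h1 : ee N (-((j:ℤ)*a)) * ee N (-((j:ℤ)*b)) = ee N (-((a:ℤ)+b) * j) := by
      rw [← ee_add]; ring_nf
    have h2 : ee N (-((j:ℤ)*a)) * ee N ((j:ℤ)*b) = ee N (((b:ℤ)-a) * j) := by
      rw [← ee_add]; ring_nf
    have h3 : ee N ((j:ℤ)*a) * ee N (-((j:ℤ)*b)) = ee N (((a:ℤ)-b) * j) := by
      rw [← ee_add]; ring_nf
    have h4 : ee N ((j:ℤ)*a) * ee N ((j:ℤ)*b) = ee N (((a:ℤ)+b) * j) := by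
      rw [← ee_add]; ring_nf
    calc (ee N (-((j:ℤ)*a)) - ee N ((j:ℤ)*a)) * Complex.I / 2 *
          ((ee N (-((j:ℤ)*b)) - ee N ((j:ℤ)*b)) * Complex.I / 2)
        = -(1/4 : ℂ) * (ee N (-((j:ℤ)*a)) * ee N (-((j:ℤ)*b))
            - ee N (-((j:ℤ)*a)) * ee N ((j:ℤ)*b)
            - ee N ((j:ℤ)*a) * ee N (-((j:ℤ)*b))
            + ee N ((j:ℤ)*a) * ee N ((j:ℤ)*b)) := by
          linear_combination ((ee N (-((j:ℤ)*a)) - ee N ((j:ℤ)*a)) *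
            (ee N (-((j:ℤ)*b)) - ee N ((j:ℤ)*b)) / 4) * Complex.I_sq
      _ = -(1/4 : ℂ) * (ee N (-((a : ℤ) + b) * j) - ee N (((b : ℤ) - a) * j)
            - ee N (((a : ℤ) - b) * j) + ee N (((a : ℤ) + b) * j)) := by
          rw [h1, h2, h3, h4]
      _ = -(1/4 : ℂ) * (ee N (-((a : ℤ) + b)) ^ j - ee N ((b : ℤ) - a) ^ j
            - ee N ((a : ℤ) - b) ^ j + ee N ((a : ℤ) + b) ^ j) := by
          rw [ee_pow, ee_pow, ee_pow, ee_pow]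
  rw [Finset.sum_congr rfl key]
  have expand : ∑ j ∈ Finset.range N, -(1/4 : ℂ) * (ee N (-((a : ℤ) + b)) ^ j
      - ee N ((b : ℤ) - a) ^ j - ee N ((a : ℤ) - b) ^ j + ee N ((a : ℤ) + b) ^ j)
      = -(1/4 : ℂ) * ((∑ j ∈ Finset.range N, ee N (-((a : ℤ) + b)) ^ j)
        - (∑ j ∈ Finset.range N, ee N ((b : ℤ) - a) ^ j)
        - (∑ j ∈ Finset.range N, ee N ((a : ℤ) - b) ^ j)
        + (∑ j ∈ Finset.range N, ee N ((a : ℤ) + b) ^ j)) := by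
    rw [← Finset.mul_sum, Finset.sum_add_distrib, Finset.sum_sub_distrib,
      Finset.sum_sub_distrib]
  rw [expand]
  have hab0 : ((a : ℤ) + b) ≠ 0 := by positivity
  have habs : |((a : ℤ) + b)| < 2 * N := by
    rw [abs_of_pos (by positivity)]; push_cast; omega
  have hsum_ne : ee N ((a : ℤ) + b) ≠ 1 := ee_ne_one N hNne _ hab0 habs
  have hsum_ne' : ee N (-((a : ℤ) + b)) ≠ 1 := by
    refine ee_ne_one N hNne _ (by omega) ?_
    rw [abs_neg]; exact habs
  by_cases hab : a = b
  · subst hab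
    have h2 : ((a : ℤ) - a) = 0 := by ring
    have heven : Even ((a : ℤ) + a) := ⟨a, rfl⟩
    rw [h2, geom_even N hNne _ heven hsum_ne,
      geom_even N hNne _ heven.neg hsum_ne', ee_zero]
    rw [if_pos rfl]
    simp only [one_pow, Finset.sum_const, Finset.card_range, nsmul_eq_mul, mul_one]
    ring
  · have hne : ((a : ℤ) - b) ≠ 0 := by
      intro h; apply hab; omega
    have habs2 : |((a : ℤ) - b)| < 2 * N := by
      rw [abs_sub_lt_iff]; constructor <;> [push_cast; push_cast] <;> omega
    have hd1 : ee N ((a : ℤ) - b) ≠ 1 := ee_ne_one N hNne _ hne habs2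
    have hd2 : ee N ((b : ℤ) - a) ≠ 1 := by
      have : ((b:ℤ) - a) = -((a:ℤ) - b) := by ring
      rw [this]
      refine ee_ne_one N hNne _ (by omega) (by rw [abs_neg]; exact habs2)
    rw [if_neg hab]
    by_cases hpar : Even ((a : ℤ) + b)
    · have hpar2 : Even ((a : ℤ) - b) := by
        rcases hpar with ⟨r, hr⟩
        exact ⟨r - b, by omega⟩
      have hpar3 : Even ((b : ℤ) - a) := by
        rcases hpar2 with ⟨r, hr⟩
        exact ⟨-r, by omega⟩
      rw [geom_even N hNne _ hpar hsum_ne, geom_even N hNne _ hpar.neg hsum_ne',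
        geom_even N hNne _ hpar2 hd1, geom_even N hNne _ hpar3 hd2]
      ring
    · have hodd : Odd ((a : ℤ) + b) := Int.not_even_iff_odd.1 hpar
      have hodd2 : Odd ((a : ℤ) - b) := by
        rcases hodd with ⟨r, hr⟩
        exact ⟨r - b, by omega⟩
      have e1 := geom_pair_odd N hNne _ hodd hsum_ne
      have e2 := geom_pair_odd N hNne _ hodd2 hd1
      have : ((b:ℤ) - a) = -((a:ℤ) - b) := by ring
      rw [this]
      linear_combination -(1/4 : ℂ) * e1 + (1/4 : ℂ) * e2

/-- the sine eigenvector matrix -/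
noncomputable def SM (n : ℕ) : Matrix (Fin n) (Fin n) ℂ :=
  Matrix.of fun j k =>
    Complex.sin ((((j.val + 1) * (k.val + 1) : ℕ) : ℂ) * ((π : ℂ) / ((n : ℂ) + 1)))

lemma SM_mul_SM (n : ℕ) : SM n * SM n = (((n : ℂ) + 1) / 2) • 1 := by
  ext k l
  rw [Matrix.mul_apply]
  have h := orth (n + 1) (by omega) (k.val + 1) (l.val + 1) (by omega) (by omega)
    (by omega) (by omega)
  rw [Finset.sum_range_succ'] at h
  simp only [Nat.cast_zero, zero_mul, Complex.sin_zero, mul_zero, add_zero] at h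
  have hrw : ∀ j : Fin n, SM n k j * SM n j l =
      Complex.sin (((j.val + 1 : ℕ) : ℂ) * ((k.val + 1 : ℕ) : ℂ) * ((π : ℂ) / ((n+1 : ℕ) : ℂ))) *
        Complex.sin (((j.val + 1 : ℕ) : ℂ) * ((l.val + 1 : ℕ) : ℂ) * ((π : ℂ) / ((n+1 : ℕ) : ℂ))) := by
    intro j
    simp only [SM, Matrix.of_apply]
    push_cast
    ring_nf
  calc ∑ j : Fin n, SM n k j * SM n j l
      = ∑ j ∈ Finset.range n, Complex.sin (((j + 1 : ℕ) : ℂ) * ((k.val + 1 : ℕ) : ℂ) *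
          ((π : ℂ) / ((n+1 : ℕ) : ℂ))) *
        Complex.sin (((j + 1 : ℕ) : ℂ) * ((l.val + 1 : ℕ) : ℂ) * ((π : ℂ) / ((n+1 : ℕ) : ℂ))) := by
        rw [← Fin.sum_univ_eq_sum_range]
        exact Finset.sum_congr rfl fun j _ => hrw j
    _ = if k.val + 1 = l.val + 1 then ((n + 1 : ℕ) : ℂ) / 2 else 0 := by
        rw [← h]
    _ = ((((n : ℂ) + 1) / 2) • (1 : Matrix (Fin n) (Fin n) ℂ)) k l := by
        rw [Matrix.smul_apply, Matrix.one_apply]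
        by_cases hkl : k = l
        · subst hkl; simp
        · rw [if_neg (by simpa using fun hh => hkl (Fin.ext hh)), if_neg hkl, smul_zero]

lemma sum_if_val (n : ℕ) (c : ℕ) (g : Fin n → ℂ) :
    (∑ k : Fin n, if c = k.val then g k else 0) = if h : c < n then g ⟨c, h⟩ else 0 := by
  by_cases h : c < n
  · rw [dif_pos h]
    rw [Finset.sum_eq_single (⟨c, h⟩ : Fin n)]
    · simp
    · intro k _ hk
      rw [if_neg]
      intro hc
      exact hk (by exact Fin.ext hc.symm)
    · intro hk; exact absurd (Finset.mem_univ _) hk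
  · rw [dif_neg h]
    apply Finset.sum_eq_zero
    intro k _
    rw [if_neg]
    intro hc
    exact h (hc ▸ k.isLt)

/-- eigenvalue relation -/
lemma adj_mul_SM (n : ℕ) : pathAdj n * SM n =
    SM n * Matrix.diagonal (fun k : Fin n =>
      2 * Complex.cos (((k.val + 1 : ℕ) : ℂ) * ((π : ℂ) / ((n : ℂ) + 1)))) := by
  ext j l
  rw [Matrix.mul_apply, Matrix.mul_diagonal]
  set θ : ℂ := (π : ℂ) / ((n : ℂ) + 1) with hθ
  set ψ : ℕ → ℂ := fun m => Complex.sin (((m * (l.val + 1) : ℕ) : ℂ) * θ) with hψ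
  have hsplit : ∀ k : Fin n, pathAdj n j k * SM n k l =
      (if j.val + 1 = k.val then ψ (k.val + 1) else 0)
        + (if k.val + 1 = j.val then ψ (k.val + 1) else 0) := by
    intro k
    simp only [pathAdj, Matrix.of_apply, SM, hψ]
    have : ¬(j.val + 1 = k.val ∧ k.val + 1 = j.val) := by omega
    split_ifs with h1 h2 h3 h4 h5 <;> simp_all <;> omega
  rw [Finset.sum_congr rfl fun k _ => hsplit k, Finset.sum_add_distrib,
    sum_if_val n (j.val + 1) (fun k => ψ (k.val + 1))]
  have hψtop : ψ (n + 1) = 0 := by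
    have : (((n+1) * (l.val+1) : ℕ) : ℂ) * θ = ((l.val + 1 : ℤ) : ℂ) * (π : ℂ) := by
      rw [hθ]
      have hne : ((n : ℂ) + 1) ≠ 0 := by
        have h1 : ((n + 1 : ℕ) : ℂ) ≠ 0 := Nat.cast_ne_zero.2 (Nat.succ_ne_zero n)
        intro hcon
        apply h1
        push_cast
        linear_combination hcon
      field_simp
      push_cast
      ring
    rw [hψ]
    simp only [this, Complex.sin_int_mul_pi]
  have hfirst : (if h : j.val + 1 < n then ψ (j.val + 1 + 1) else 0) = ψ (j.val + 2) := by
    by_cases h : j.val + 1 < n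
    · rw [dif_pos h]
    · rw [dif_neg h]
      have : j.val + 2 = n + 1 := by omega
      rw [this, hψtop]
  rw [hfirst]
  have hsecond : (∑ k : Fin n, if k.val + 1 = j.val then ψ (k.val + 1) else 0) = ψ j.val := by
    rcases Nat.eq_zero_or_pos j.val with h0 | hpos
    · rw [h0]
      rw [Finset.sum_eq_zero (fun k _ => if_neg (by omega))]
      rw [hψ]
      simp
    · have : ∀ k : Fin n, (if k.val + 1 = j.val then ψ (k.val + 1) else 0)
          = (if j.val - 1 = k.val then ψ (k.val + 1) else 0) := by
        intro k
        split_ifs with h1 h2 <;> first | rfl | omega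
      rw [Finset.sum_congr rfl fun k _ => this k, sum_if_val n (j.val - 1)
        (fun k => ψ (k.val + 1)), dif_pos (by omega : j.val - 1 < n)]
      congr 1
      show j.val - 1 + 1 = j.val
      omega
  rw [hsecond]
  -- now the trig identity: ψ j + ψ (j+2) = SM j l * 2 cos((l+1)θ)
  have hx : ∀ m : ℕ, ψ m = Complex.sin ((m : ℂ) * ((l.val + 1 : ℕ) : ℂ) * θ) := by
    intro m; rw [hψ]; push_cast; ring_nf
  rw [hx, hx]
  simp only [SM, Matrix.of_apply, ← hθ]
  set x : ℂ := ((j.val + 1 : ℕ) : ℂ) * ((l.val + 1 : ℕ) : ℂ) * θ with hxdef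
  set y : ℂ := ((l.val + 1 : ℕ) : ℂ) * θ with hydef
  have e1 : (j.val : ℂ) * ((l.val + 1 : ℕ) : ℂ) * θ = x - y := by
    rw [hxdef, hydef]; push_cast; ring
  have e2 : ((j.val + 2 : ℕ) : ℂ) * ((l.val + 1 : ℕ) : ℂ) * θ = x + y := by
    rw [hxdef, hydef]; push_cast; ring
  have e3 : (((j.val+1) * (l.val+1) : ℕ) : ℂ) * θ = x := by
    rw [hxdef]; push_cast; ring
  rw [e1, e2, e3, Complex.sin_sub, Complex.sin_add, hydef]
  ring


lemma pathU_apply (n : ℕ) (τ : ℝ) (a' b' : Fin n) :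
    pathU n τ a' b' = ∑ k : Fin n,
      Complex.sin ((((a'.val + 1) * (k.val + 1) : ℕ) : ℂ) * ((π : ℂ) / ((n : ℂ) + 1))) *
        Complex.exp (Complex.I * (τ : ℂ) *
          (2 * Complex.cos (((k.val + 1 : ℕ) : ℂ) * ((π : ℂ) / ((n : ℂ) + 1))))) *
        ((2 : ℂ) / ((n : ℂ) + 1)) *
        Complex.sin ((((k.val + 1) * (b'.val + 1) : ℕ) : ℂ) * ((π : ℂ) / ((n : ℂ) + 1))) := by
  classical
  have hNC : ((n : ℂ) + 1) ≠ 0 := by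
    have h1 : ((n + 1 : ℕ) : ℂ) ≠ 0 := Nat.cast_ne_zero.2 (Nat.succ_ne_zero n)
    intro hcon; apply h1; push_cast; linear_combination hcon
  set Sm := SM n with hSm
  set T : Matrix (Fin n) (Fin n) ℂ := ((2 : ℂ) / ((n : ℂ) + 1)) • Sm with hT
  have hST : Sm * T = 1 := by
    rw [hT, Matrix.mul_smul, hSm, SM_mul_SM, smul_smul]
    rw [div_mul_div_comm]
    rw [show (2 : ℂ) * ((n : ℂ) + 1) / (((n : ℂ) + 1) * 2) = 1 by field_simp]
    simp
  have hTS : T * Sm = 1 := by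
    rw [hT, Matrix.smul_mul, hSm, SM_mul_SM, smul_smul]
    rw [div_mul_div_comm]
    rw [show (2 : ℂ) * ((n : ℂ) + 1) / (((n : ℂ) + 1) * 2) = 1 by field_simp]
    simp
  set U : (Matrix (Fin n) (Fin n) ℂ)ˣ := ⟨Sm, T, hST, hTS⟩ with hU
  set D : Matrix (Fin n) (Fin n) ℂ := Matrix.diagonal (fun k : Fin n =>
      2 * Complex.cos (((k.val + 1 : ℕ) : ℂ) * ((π : ℂ) / ((n : ℂ) + 1)))) with hD
  have hA : pathAdj n = (↑U : Matrix (Fin n) (Fin n) ℂ) * D * (↑U⁻¹ : Matrix (Fin n) (Fin n) ℂ) := by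
    have h1 : pathAdj n * Sm = Sm * D := adj_mul_SM n
    have : (↑U⁻¹ : Matrix (Fin n) (Fin n) ℂ) = T := rfl
    rw [this]
    calc pathAdj n = pathAdj n * (Sm * T) := by rw [hST, Matrix.mul_one]
      _ = (pathAdj n * Sm) * T := by rw [Matrix.mul_assoc]
      _ = Sm * D * T := by rw [h1]
  have hsmul : (Complex.I * (τ : ℂ)) • pathAdj n
      = (↑U : Matrix (Fin n) (Fin n) ℂ) * ((Complex.I * (τ : ℂ)) • D) *
        (↑U⁻¹ : Matrix (Fin n) (Fin n) ℂ) := by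
    rw [hA, Matrix.mul_smul, Matrix.smul_mul]
  rw [pathU, hsmul, Matrix.exp_units_conj]
  have hDexp : NormedSpace.exp ((Complex.I * (τ : ℂ)) • D)
      = Matrix.diagonal (fun k : Fin n => Complex.exp (Complex.I * (τ : ℂ) *
          (2 * Complex.cos (((k.val + 1 : ℕ) : ℂ) * ((π : ℂ) / ((n : ℂ) + 1)))))) := by
    rw [hD, ← Matrix.diagonal_smul, Matrix.exp_diagonal]
    congr 1
    funext k
    rw [Pi.exp_def, ← Complex.exp_eq_exp_ℂ]
    simp only [Pi.smul_apply, smul_eq_mul]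
  rw [hDexp]
  have hUinv : (↑U⁻¹ : Matrix (Fin n) (Fin n) ℂ) = T := rfl
  have hUval : (↑U : Matrix (Fin n) (Fin n) ℂ) = Sm := rfl
  rw [hUinv, hUval, Matrix.mul_apply]
  apply Finset.sum_congr rfl
  intro k _
  rw [Matrix.mul_diagonal, hT, Matrix.smul_apply, hSm]
  simp only [SM, Matrix.of_apply, smul_eq_mul]
  ring


lemma prod_dist {ι : Type*} (s : Finset ι) (f g : ι → ℂ)
    (hf : ∀ i ∈ s, ‖f i‖ ≤ 1) (hg : ∀ i ∈ s, ‖g i‖ ≤ 1) :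
    ‖(∏ i ∈ s, f i) - ∏ i ∈ s, g i‖ ≤ ∑ i ∈ s, ‖f i - g i‖ := by
  classical
  induction s using Finset.induction_on with
  | empty => simp
  | @insert a s ha ih =>
    rw [Finset.prod_insert ha, Finset.prod_insert ha, Finset.sum_insert ha]
    have hf' : ∀ i ∈ s, ‖f i‖ ≤ 1 := fun i hi => hf i (Finset.mem_insert_of_mem hi)
    have hg' : ∀ i ∈ s, ‖g i‖ ≤ 1 := fun i hi => hg i (Finset.mem_insert_of_mem hi)
    have hFprod : ‖∏ i ∈ s, f i‖ ≤ 1 := by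
      rw [norm_prod]
      exact Finset.prod_le_one (fun i _ => norm_nonneg _) hf'
    have hga : ‖g a‖ ≤ 1 := hg a (Finset.mem_insert_self a s)
    calc ‖f a * ∏ i ∈ s, f i - g a * ∏ i ∈ s, g i‖
        ≤ ‖f a * ∏ i ∈ s, f i - g a * ∏ i ∈ s, f i‖
          + ‖g a * ∏ i ∈ s, f i - g a * ∏ i ∈ s, g i‖ := by
          have := norm_sub_le_norm_sub_add_norm_sub (f a * ∏ i ∈ s, f i) (g a * ∏ i ∈ s, f i)
            (g a * ∏ i ∈ s, g i)
          exact this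
      _ ≤ ‖f a - g a‖ + ‖(∏ i ∈ s, f i) - ∏ i ∈ s, g i‖ := by
          rw [← sub_mul, ← mul_sub, norm_mul, norm_mul]
          exact add_le_add (mul_le_of_le_one_right (norm_nonneg _) hFprod)
            (mul_le_of_le_one_left (norm_nonneg _) hga)
      _ ≤ ‖f a - g a‖ + ∑ i ∈ s, ‖f i - g i‖ := by
          have := ih hf' hg'
          linarith

lemma align {ι : Type*} [Fintype ι] (w : ι → ℝ) (hw : ∀ i, 0 ≤ w i)
    (hsum : ∑ i, w i = 1) (u : ι → ℂ) (hu : ∀ i, ‖u i‖ = 1)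
    {ε : ℝ} (hε : 0 < ε) (hε1 : ε < 1)
    (hz : 1 - ε < ‖∑ i, (w i : ℂ) * u i‖) :
    ∃ ζ : ℂ, ‖ζ‖ = 1 ∧ ∀ i, w i * (‖u i - ζ‖)^2 < 2 * ε := by
  set z : ℂ := ∑ i, (w i : ℂ) * u i with hzdef
  set r : ℝ := ‖z‖ with hrdef
  have hzabs : (0 : ℝ) < r := lt_of_lt_of_le (by linarith) (le_of_lt hz)
  set ζ : ℂ := z / (r : ℂ) with hζ
  have hζabs : ‖ζ‖ = 1 := by
    rw [hζ, norm_div, Complex.norm_real, Real.norm_eq_abs, ← hrdef, abs_of_pos hzabs, div_self hzabs.ne']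
  have hre : ((starRingEnd ℂ) ζ * z).re = r := by
    have h1 : (starRingEnd ℂ) ζ * z = (((Complex.normSq z) / r : ℝ) : ℂ) := by
      rw [hζ, map_div₀, Complex.conj_ofReal]
      rw [div_mul_eq_mul_div, Complex.conj_mul']
      rw [Complex.normSq_eq_norm_sq]
      push_cast
      ring
    rw [h1, Complex.ofReal_re, Complex.normSq_eq_norm_sq, ← hrdef]
    field_simp
  have hterm : ∀ i, 0 ≤ 1 - ((starRingEnd ℂ) ζ * u i).re := by
    intro i
    have h1 : ((starRingEnd ℂ) ζ * u i).re ≤ ‖(starRingEnd ℂ) ζ * u i‖ :=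
      Complex.re_le_norm _
    rw [norm_mul, Complex.norm_conj, hζabs, hu, one_mul] at h1
    linarith
  have hsum2 : ∑ i, w i * (1 - ((starRingEnd ℂ) ζ * u i).re) = 1 - r := by
    have h2 : ∑ i, w i * ((starRingEnd ℂ) ζ * u i).re = ((starRingEnd ℂ) ζ * z).re := by
      rw [hzdef, Finset.mul_sum, Complex.re_sum]
      apply Finset.sum_congr rfl
      intro i _
      rw [show (starRingEnd ℂ) ζ * ((w i : ℂ) * u i) = (w i : ℂ) * ((starRingEnd ℂ) ζ * u i) by
        ring, Complex.re_ofReal_mul]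
    calc ∑ i, w i * (1 - ((starRingEnd ℂ) ζ * u i).re)
        = (∑ i, w i) - ∑ i, w i * ((starRingEnd ℂ) ζ * u i).re := by
          rw [← Finset.sum_sub_distrib]
          apply Finset.sum_congr rfl
          intro i _; ring
      _ = 1 - r := by rw [hsum, h2, hre]
  refine ⟨ζ, hζabs, ?_⟩
  intro i
  have hle : w i * (1 - ((starRingEnd ℂ) ζ * u i).re) ≤ 1 - r := by
    rw [← hsum2]
    apply Finset.single_le_sum (f := fun i => w i * (1 - ((starRingEnd ℂ) ζ * u i).re))
    · intro j _
      exact mul_nonneg (hw j) (hterm j)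
    · exact Finset.mem_univ i
  have hsq : (‖u i - ζ‖)^2 = 2 * (1 - ((starRingEnd ℂ) ζ * u i).re) := by
    rw [Complex.sq_norm, Complex.normSq_sub]
    have h1 : Complex.normSq (u i) = 1 := by
      rw [Complex.normSq_eq_norm_sq, hu]; norm_num
    have h2 : Complex.normSq ζ = 1 := by
      rw [Complex.normSq_eq_norm_sq, hζabs]; norm_num
    rw [h1, h2]
    have h3 : (u i * (starRingEnd ℂ) ζ).re = ((starRingEnd ℂ) ζ * u i).re := by
      rw [mul_comm]
    rw [h3]; ring
  rw [hsq]
  have : 1 - r < ε := by linarith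
  nlinarith [hw i, hterm i, hle]

lemma chain (t p : ℕ) (ht : 2 ≤ t) (hp : p.Prime) (hodd : Odd p)
    (a : ℕ) (ha : 1 ≤ a) (haN : a < 2 ^ t * p) (hndvd : ¬ 2 ^ (t - 1) ∣ a)
    (k₀ : ℕ) (hk₀ : k₀ = 1 ∨ k₀ = 2) :
    ∃ r : ℕ → ℕ,
      (∀ j, j < p → 1 ≤ r j ∧ r j < 2 ^ t * p ∧ ¬ ((2 ^ t * p) ∣ a * r j)
        ∧ r j % 2 = k₀ % 2)
      ∧ ∑ j ∈ Finset.range p, Real.cos ((r j : ℝ) * π / ((2 ^ t * p : ℕ) : ℝ)) = 0 := by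
  have hp3 : 3 ≤ p := by
    have hp2 := hp.two_le
    have hpne : p ≠ 2 := by
      rcases hodd with ⟨m, hm⟩
      omega
    omega
  have hpow3 : 2 ^ (t + 1) = 2 * 2 ^ t := by rw [pow_succ]; ring
  have hpow1 : 2 ^ t = 2 * 2 ^ (t - 1) := by
    rw [show (2:ℕ) * 2 ^ (t-1) = 2^(t-1) * 2^1 by ring, ← pow_add]
    congr 1
    omega
  have e8 : (2:ℕ) ^ (t + 1) = 8 * 2 ^ (t - 2) := by
    rw [show (8:ℕ) * 2 ^ (t-2) = 2^(t-2) * 2^3 by ring, ← pow_add]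
    congr 1
    omega
  have e4 : (2:ℕ) ^ t = 4 * 2 ^ (t - 2) := by
    rw [show (4:ℕ) * 2 ^ (t-2) = 2^(t-2) * 2^2 by ring, ← pow_add]
    congr 1
    omega
  have hN0 : 0 < 2 ^ t * p := by positivity
  -- divisibility obstruction
  have hKdvd : ∀ j : ℕ, ¬ ((2 ^ t * p) ∣ a * (k₀ + 2 ^ (t + 1) * j)) := by
    intro j hdvd
    have h2t : 2 ^ t ∣ a * (k₀ + 2 ^ (t + 1) * j) := dvd_trans (Dvd.intro p rfl) hdvd
    rcases hk₀ with h | h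
    · subst h
      have hKodd : Odd (1 + 2 ^ (t + 1) * j) := ⟨2 ^ t * j, by rw [hpow3]; ring⟩
      have hcop : Nat.Coprime (2 ^ t) (1 + 2 ^ (t + 1) * j) :=
        Nat.Coprime.pow_left _ (Nat.coprime_two_left.2 hKodd)
      have : 2 ^ t ∣ a := hcop.dvd_of_dvd_mul_right h2t
      exact hndvd (dvd_trans (pow_dvd_pow 2 (by omega)) this)
    · subst h
      have hKM : 2 + 2 ^ (t + 1) * j = 2 * (1 + 2 ^ t * j) := by rw [hpow3]; ring
      have hModd : Odd (1 + 2 ^ t * j) := ⟨2 ^ (t - 1) * j, by rw [hpow1]; ring⟩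
      have h1 : 2 * 2 ^ (t - 1) ∣ 2 * (a * (1 + 2 ^ t * j)) := by
        rw [← hpow1, show 2 * (a * (1 + 2 ^ t * j)) = a * (2 * (1 + 2 ^ t * j)) by ring, ← hKM]
        exact h2t
      have h2 : 2 ^ (t - 1) ∣ a * (1 + 2 ^ t * j) :=
        (mul_dvd_mul_iff_left (two_ne_zero)).1 h1
      have hcop : Nat.Coprime (2 ^ (t - 1)) (1 + 2 ^ t * j) :=
        Nat.Coprime.pow_left _ (Nat.coprime_two_left.2 hModd)
      exact hndvd (hcop.dvd_of_dvd_mul_right h2)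
  -- per-j structural facts
  have hfacts : ∀ j, j < p →
      (1 ≤ k₀ + 2 ^ (t + 1) * j) ∧ (k₀ + 2 ^ (t + 1) * j < 2 * (2 ^ t * p)) ∧
        (k₀ + 2 ^ (t + 1) * j ≠ 2 ^ t * p) ∧ ((k₀ + 2 ^ (t + 1) * j) % 2 = k₀ % 2) := by
    intro j hj
    have a1 : k₀ + 2 ^ (t + 1) * j = k₀ + 8 * (2 ^ (t - 2) * j) := by rw [e8]; ring
    have a2 : 2 ^ t * p = 4 * (2 ^ (t - 2) * p) := by rw [e4]; ring
    have a3 : 2 ^ (t - 2) * j ≤ 2 ^ (t - 2) * (p - 1) := Nat.mul_le_mul_left _ (by omega)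
    have a4 : 2 ^ (t - 2) * (p - 1) + 2 ^ (t - 2) = 2 ^ (t - 2) * p := by
      rw [← Nat.mul_succ]
      congr 1
      omega
    have a5 : 1 ≤ (2:ℕ) ^ (t - 2) := Nat.one_le_two_pow
    rcases hk₀ with h | h <;> (subst h; omega)
  set r : ℕ → ℕ := fun j => if k₀ + 2 ^ (t + 1) * j < 2 ^ t * p
    then k₀ + 2 ^ (t + 1) * j else 2 * (2 ^ t * p) - (k₀ + 2 ^ (t + 1) * j) with hrdef
  have hrprop : ∀ j, j < p → (1 ≤ r j ∧ r j < 2 ^ t * p ∧ r j % 2 = k₀ % 2 ∧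
      (r j = k₀ + 2 ^ (t + 1) * j ∨
        r j = 2 * (2 ^ t * p) - (k₀ + 2 ^ (t + 1) * j))) := by
    intro j hj
    obtain ⟨f1, f2, f3, f4⟩ := hfacts j hj
    rw [hrdef]
    simp only
    split_ifs with hsplit <;> refine ⟨by omega, by omega, by omega, ?_⟩
    · left; rfl
    · right; rfl
  refine ⟨r, ?_, ?_⟩
  · intro j hj
    obtain ⟨f1, f2, f3, f4⟩ := hfacts j hj
    obtain ⟨g1, g2, g3, g4⟩ := hrprop j hj
    refine ⟨g1, g2, ?_, g3⟩
    intro hdvd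
    apply hKdvd j
    rcases g4 with h | h
    · rwa [h] at hdvd
    · rw [h] at hdvd
      have hsum : a * (2 * (2 ^ t * p) - (k₀ + 2 ^ (t + 1) * j))
          + a * (k₀ + 2 ^ (t + 1) * j) = 2 * a * (2 ^ t * p) := by
        rw [← Nat.mul_add, Nat.sub_add_cancel f2.le]
        ring
      have hd2 : (2 ^ t * p) ∣ 2 * a * (2 ^ t * p) := dvd_mul_left _ _
      have hd3 := Nat.dvd_sub hd2 hdvd
      rwa [show 2 * a * (2 ^ t * p) - a * (2 * (2 ^ t * p) - (k₀ + 2 ^ (t + 1) * j))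
          = a * (k₀ + 2 ^ (t + 1) * j) by omega] at hd3
  · -- cosine sum
    set N : ℕ := 2 ^ t * p with hNdef
    have hNne : N ≠ 0 := hN0.ne'
    -- complex version
    have hC : ∑ j ∈ Finset.range p, Complex.cos ((r j : ℂ) * ((π : ℂ) / (N : ℂ))) = 0 := by
      have hcosK : ∀ j ∈ Finset.range p,
          Complex.cos ((r j : ℂ) * ((π : ℂ) / (N : ℂ)))
            = (ee N ((k₀ : ℤ) + 2 ^ (t + 1) * j) + ee N (-((k₀ : ℤ) + 2 ^ (t + 1) * j))) / 2 := by
        intro j hj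
        rw [Finset.mem_range] at hj
        obtain ⟨f1, f2, f3, f4⟩ := hfacts j hj
        obtain ⟨g1, g2, g3, g4⟩ := hrprop j hj
        have base : Complex.cos ((r j : ℂ) * ((π : ℂ) / (N : ℂ)))
            = (ee N ((r j : ℤ)) + ee N (-(r j : ℤ))) / 2 := by
          have := cos_eq_ee N ((r j : ℤ))
          simpa using this
        rw [base]
        rcases g4 with h | h
        · rw [h]; push_cast; ring_nf
        · have hcast : ((r j : ℤ)) = 2 * N - ((k₀ : ℤ) + 2 ^ (t + 1) * j) := by
            rw [h]
            push_cast [Nat.cast_sub f2.le]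
            ring
          have h2N : ee N (2 * (N : ℤ)) = 1 := (ee_eq_one_iff N hNne _).2 ⟨1, by ring⟩
          have hplus : ee N ((r j : ℤ)) = ee N (-((k₀ : ℤ) + 2 ^ (t + 1) * j)) := by
            rw [hcast, show (2 * (N:ℤ) - ((k₀ : ℤ) + 2 ^ (t + 1) * j))
              = 2 * (N:ℤ) + (-((k₀ : ℤ) + 2 ^ (t + 1) * j)) by ring, ee_add, h2N, one_mul]
          have hminus : ee N (-(r j : ℤ)) = ee N ((k₀ : ℤ) + 2 ^ (t + 1) * j) := by
            rw [hcast, show -(2 * (N:ℤ) - ((k₀ : ℤ) + 2 ^ (t + 1) * j))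
              = -(2 * (N:ℤ)) + ((k₀ : ℤ) + 2 ^ (t + 1) * j) by ring, ee_add, ee_neg, h2N]
            simp
          rw [hplus, hminus]
          ring
      rw [Finset.sum_congr rfl hcosK]
      have hsplit : ∀ j ∈ Finset.range p,
          (ee N ((k₀ : ℤ) + 2 ^ (t + 1) * j) + ee N (-((k₀ : ℤ) + 2 ^ (t + 1) * j))) / 2
          = (ee N k₀ * (ee N (2 ^ (t + 1))) ^ j) / 2
            + (ee N (-(k₀ : ℤ)) * (ee N (-(2 ^ (t + 1) : ℤ))) ^ j) / 2 := by
        intro j _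
        rw [ee_pow, ee_pow, ← ee_add, ← ee_add]
        rw [show (k₀ : ℤ) + (2:ℤ) ^ (t+1) * j = (k₀ : ℤ) + 2 ^ (t + 1) * j by push_cast; ring,
          show -(k₀ : ℤ) + (-(2:ℤ) ^ (t+1)) * j = -((k₀ : ℤ) + 2 ^ (t + 1) * j) by push_cast; ring]
        ring
      rw [Finset.sum_congr rfl hsplit, Finset.sum_add_distrib]
      have hx1 : ee N ((2:ℤ) ^ (t + 1)) ≠ 1 := by
        intro h
        have hdvd := (ee_eq_one_iff N hNne _).1 h
        have hdvd' : (2 * N : ℕ) ∣ 2 ^ (t + 1) := by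
          have : ((2 * N : ℕ) : ℤ) ∣ ((2 ^ (t+1) : ℕ) : ℤ) := by push_cast; convert hdvd using 2
          exact_mod_cast this
        have hle := Nat.le_of_dvd (by positivity) hdvd'
        have : 2 * N = 2 ^ (t + 1) * p := by rw [hNdef, hpow3]; ring
        nlinarith [Nat.one_le_two_pow (n := t + 1)]
      have hxp : ee N ((2:ℤ) ^ (t + 1)) ^ p = 1 := by
        rw [ee_pow, ee_eq_one_iff N hNne]
        refine ⟨1, ?_⟩
        rw [hNdef]
        push_cast [hpow3]
        ring
      have hx1' : ee N (-((2:ℤ) ^ (t + 1))) ≠ 1 := by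
        rw [ee_neg]
        intro h
        apply hx1
        have := congrArg (· * ee N ((2:ℤ) ^ (t+1))) h
        simpa [inv_mul_cancel₀ (ee_ne_zero N _)] using this.symm
      have hxp' : ee N (-((2:ℤ) ^ (t + 1))) ^ p = 1 := by
        rw [ee_neg, inv_pow, hxp]
        simp
      have hs1 : ∑ j ∈ Finset.range p, (ee N k₀ * (ee N (2 ^ (t + 1))) ^ j) / 2 = 0 := by
        rw [← Finset.sum_div, ← Finset.mul_sum, geom_sum_eq hx1, hxp]
        simp
      have hs2 : ∑ j ∈ Finset.range p,
          (ee N (-(k₀ : ℤ)) * (ee N (-(2 ^ (t + 1) : ℤ))) ^ j) / 2 = 0 := by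
        rw [← Finset.sum_div, ← Finset.mul_sum, geom_sum_eq hx1', hxp']
        simp
      rw [hs1, hs2, add_zero]
    -- transfer to ℝ
    have hcast : ((∑ j ∈ Finset.range p, Real.cos ((r j : ℝ) * π / ((N : ℕ) : ℝ)) : ℝ) : ℂ)
        = ∑ j ∈ Finset.range p, Complex.cos ((r j : ℂ) * ((π : ℂ) / (N : ℂ))) := by
      push_cast
      apply Finset.sum_congr rfl
      intro j _
      congr 1
      push_cast
      ring
    have := hcast.trans hC
    exact_mod_cast this

lemma cos_nat_pi (m : ℕ) : Complex.cos ((m : ℂ) * (π : ℂ)) = (-1 : ℂ) ^ m := by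
  induction m with
  | zero => simp
  | succ k ih =>
    have : ((k + 1 : ℕ) : ℂ) * (π : ℂ) = (k : ℂ) * (π : ℂ) + (π : ℂ) := by push_cast; ring
    rw [this, Complex.cos_add, ih, Complex.cos_pi, Complex.sin_pi, pow_succ]
    ring

lemma sin_nat_pi (m : ℕ) : Complex.sin ((m : ℂ) * (π : ℂ)) = 0 := by
  have : ((m : ℕ) : ℂ) * (π : ℂ) = (((m : ℤ)) : ℂ) * (π : ℂ) := by push_cast; ring
  rw [this, Complex.sin_int_mul_pi]

lemma key (n N a : ℕ) (hnn : n + 1 = N) (ha : 1 ≤ a) (haN : a < N) (A B : Fin n)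
    (hA : (A : ℕ) + 1 = a) (hB : (B : ℕ) + 1 = N - a) (τ : ℝ) :
    pathU n τ A B = ∑ k : Fin n,
      (((2 / (N : ℝ) * (Real.sin (((a * (k.val + 1) : ℕ) : ℝ) * π / (N : ℝ))) ^ 2 : ℝ)) : ℂ) *
        ((-1 : ℂ) ^ (k.val) * Complex.exp (Complex.I *
          (((2 * τ * Real.cos (((k.val + 1 : ℕ) : ℝ) * π / (N : ℝ)) : ℝ)) : ℂ))) := by
  have hn1 : ((n : ℂ) + 1) ≠ 0 := by
    have h1 : ((n + 1 : ℕ) : ℂ) ≠ 0 := Nat.cast_ne_zero.2 (Nat.succ_ne_zero n)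
    intro hcon; apply h1; push_cast; linear_combination hcon
  have hπN : ((N : ℕ) : ℂ) * ((π : ℂ) / ((n : ℂ) + 1)) = (π : ℂ) := by
    rw [← hnn]; push_cast; field_simp
  rw [pathU_apply]
  apply Finset.sum_congr rfl
  intro k _
  set θC : ℂ := (π : ℂ) / ((n : ℂ) + 1) with hθC
  -- first sine factor
  have harg : (((a * (k.val + 1) : ℕ) : ℂ)) * θC
      = ((((a * (k.val + 1) : ℕ) : ℝ) * π / (N : ℝ) : ℝ) : ℂ) := by
    rw [hθC, ← hnn]; push_cast; ring
  have s1 : Complex.sin ((((A.val + 1) * (k.val + 1) : ℕ) : ℂ) * θC)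
      = ((Real.sin (((a * (k.val + 1) : ℕ) : ℝ) * π / (N : ℝ)) : ℝ) : ℂ) := by
    rw [hA, harg, ← Complex.ofReal_sin]
  -- exponential factor
  have harg2 : ((k.val + 1 : ℕ) : ℂ) * θC = ((((k.val + 1 : ℕ) : ℝ) * π / (N : ℝ) : ℝ) : ℂ) := by
    rw [hθC, ← hnn]; push_cast; ring
  have s2 : Complex.exp (Complex.I * (τ : ℂ) * (2 * Complex.cos (((k.val + 1 : ℕ) : ℂ) * θC)))
      = Complex.exp (Complex.I *
          (((2 * τ * Real.cos (((k.val + 1 : ℕ) : ℝ) * π / (N : ℝ)) : ℝ)) : ℂ)) := by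
    congr 1
    rw [harg2, ← Complex.ofReal_cos]
    push_cast
    ring
  -- second sine factor
  have s3 : Complex.sin ((((k.val + 1) * (B.val + 1) : ℕ) : ℂ) * θC)
      = (-1 : ℂ) ^ (k.val) *
        ((Real.sin (((a * (k.val + 1) : ℕ) : ℝ) * π / (N : ℝ)) : ℝ) : ℂ) := by
    rw [hB]
    have hsub : ((((k.val + 1) * (N - a) : ℕ) : ℂ))
        = ((k.val + 1 : ℕ) : ℂ) * ((N : ℂ) - (a : ℂ)) := by
      push_cast [Nat.cast_sub haN.le]
      ring
    have harg3 : ((((k.val + 1) * (N - a) : ℕ) : ℂ)) * θC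
        = ((k.val + 1 : ℕ) : ℂ) * (π : ℂ) - (((a * (k.val + 1) : ℕ) : ℂ)) * θC := by
      calc ((((k.val + 1) * (N - a) : ℕ) : ℂ)) * θC
          = ((k.val + 1 : ℕ) : ℂ) * (((N : ℕ) : ℂ) * θC)
            - (((a * (k.val + 1) : ℕ) : ℂ)) * θC := by rw [hsub]; push_cast; ring
        _ = _ := by rw [hθC, hπN]
    rw [harg3, Complex.sin_sub, sin_nat_pi, cos_nat_pi, harg, ← Complex.ofReal_sin]
    rw [pow_succ]
    ring
  rw [s1, s2, s3]
  have hcast : (((2 / (N : ℝ) * (Real.sin (((a * (k.val + 1) : ℕ) : ℝ) * π / (N : ℝ))) ^ 2 : ℝ)) : ℂ)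
      = 2 / ((n : ℂ) + 1) *
        ((Real.sin (((a * (k.val + 1) : ℕ) : ℝ) * π / (N : ℝ)) : ℝ) : ℂ) ^ 2 := by
    rw [← hnn]; push_cast; ring
  rw [hcast]
  ring

lemma sin_ne_zero_of_not_dvd (N m : ℕ) (hN : 0 < N) (hm : ¬ (N ∣ m)) :
    Real.sin ((m : ℝ) * π / (N : ℝ)) ≠ 0 := by
  intro h
  rw [Real.sin_eq_zero_iff] at h
  obtain ⟨z, hz⟩ := h
  have hNr : (N : ℝ) ≠ 0 := Nat.cast_ne_zero.2 hN.ne'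
  have hz' : (z : ℝ) * N = m := by
    have hπ : (π : ℝ) ≠ 0 := Real.pi_ne_zero
    field_simp at hz
    have := mul_right_cancel₀ hπ (by rw [hz] : (z : ℝ) * N * π = (m : ℝ) * π)
    linarith
  have hzint : (z : ℤ) * N = m := by exact_mod_cast hz'
  apply hm
  have : (N : ℤ) ∣ (m : ℤ) := ⟨z, by linarith [hzint]⟩
  exact_mod_cast this

lemma weight_sum (n N a : ℕ) (hnn : n + 1 = N) (ha : 1 ≤ a) (haN : a < N) :
    ∑ k : Fin n, (2 / (N : ℝ) * (Real.sin (((a * (k.val + 1) : ℕ) : ℝ) * π / (N : ℝ))) ^ 2) = 1 := by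
  have hN0 : 0 < N := by omega
  have hNr : (N : ℝ) ≠ 0 := Nat.cast_ne_zero.2 hN0.ne'
  have h := orth N hN0 a a ha haN ha haN
  rw [if_pos rfl, show Finset.range N = Finset.range (n + 1) from by rw [hnn],
    Finset.sum_range_succ'] at h
  simp only [Nat.cast_zero, zero_mul, Complex.sin_zero, mul_zero] at h
  -- h : ∑ j in range (N-1), sin((j+1) a θ) * sin((j+1) a θ) + 0 = N/2  (range (N-1) since N = (N-1)+1)
  have hcastterm : ∀ j : ℕ,
      Complex.sin (((j + 1 : ℕ) : ℂ) * (a : ℂ) * ((π : ℂ) / (N : ℂ))) *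
        Complex.sin (((j + 1 : ℕ) : ℂ) * (a : ℂ) * ((π : ℂ) / (N : ℂ)))
      = (((Real.sin (((a * (j + 1) : ℕ) : ℝ) * π / (N : ℝ)))^2 : ℝ) : ℂ) := by
    intro j
    have harg : ((j + 1 : ℕ) : ℂ) * (a : ℂ) * ((π : ℂ) / (N : ℂ))
        = ((((a * (j + 1) : ℕ) : ℝ) * π / (N : ℝ) : ℝ) : ℂ) := by push_cast; ring
    rw [harg, ← Complex.ofReal_sin]
    push_cast
    ring
  have h2 : ((∑ k : Fin n, (Real.sin (((a * (k.val + 1) : ℕ) : ℝ) * π / (N : ℝ)))^2 : ℝ) : ℂ)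
      = (N : ℂ) / 2 := by
    calc ((∑ k : Fin n, (Real.sin (((a * (k.val + 1) : ℕ) : ℝ) * π / (N : ℝ)))^2 : ℝ) : ℂ)
        = ∑ k : Fin n,
            (((Real.sin (((a * (k.val + 1) : ℕ) : ℝ) * π / (N : ℝ)))^2 : ℝ) : ℂ) := by
          push_cast
          rfl
      _ = ∑ k : Fin n, Complex.sin (((k.val + 1 : ℕ) : ℂ) * (a : ℂ) * ((π : ℂ) / (N : ℂ))) *
            Complex.sin (((k.val + 1 : ℕ) : ℂ) * (a : ℂ) * ((π : ℂ) / (N : ℂ))) :=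
          Finset.sum_congr rfl fun k _ => (hcastterm k.val).symm
      _ = ∑ j ∈ Finset.range n, Complex.sin (((j + 1 : ℕ) : ℂ) * (a : ℂ) * ((π : ℂ) / (N : ℂ))) *
            Complex.sin (((j + 1 : ℕ) : ℂ) * (a : ℂ) * ((π : ℂ) / (N : ℂ))) :=
          Fin.sum_univ_eq_sum_range
            (fun j => Complex.sin (((j + 1 : ℕ) : ℂ) * (a : ℂ) * ((π : ℂ) / (N : ℂ))) *
              Complex.sin (((j + 1 : ℕ) : ℂ) * (a : ℂ) * ((π : ℂ) / (N : ℂ)))) n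
      _ = (N : ℂ) / 2 := by linear_combination h
  have h3 : ∑ k : Fin n, (Real.sin (((a * (k.val + 1) : ℕ) : ℝ) * π / (N : ℝ)))^2
      = (N : ℝ) / 2 := by
    have h4 : ((∑ k : Fin n, (Real.sin (((a * (k.val + 1) : ℕ) : ℝ) * π / (N : ℝ)))^2 : ℝ) : ℂ)
        = (((N : ℝ) / 2 : ℝ) : ℂ) := by rw [h2]; push_cast; ring
    exact_mod_cast h4
  rw [← Finset.mul_sum, h3]
  field_simp


end PGSTaux

open PGSTaux

/-- If `n = 2^t * p - 1` where `t` is a positive integer and `p` is an odd prime, and `a` is a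
vertex not divisible by `2^(t-1)`, then pretty good state transfer does not occur in `P_n`
between vertices `a` and `n + 1 - a`. -/
theorem no_pgst_of_not_dvd (t p : ℕ) (ht : 0 < t) (hp : p.Prime) (hp' : Odd p)
    (n : ℕ) (hn : n = 2 ^ t * p - 1)
    (a : ℕ) (ha : 1 ≤ a) (ha' : a ≤ n) (hndvd : ¬ 2 ^ (t - 1) ∣ a) :
    ¬ PGST n ⟨a - 1, by omega⟩ ⟨n + 1 - a - 1, by omega⟩ := by
  intro hP
  rcases Nat.lt_or_ge t 2 with ht2 | ht2
  · apply hndvd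
    rw [show t - 1 = 0 by omega, pow_zero]
    exact one_dvd a
  have hp3 : 3 ≤ p := by
    have hp2 := hp.two_le
    have : p ≠ 2 := by rcases hp' with ⟨m, hm⟩; omega
    omega
  set N : ℕ := 2 ^ t * p with hNdef
  have hN8 : 8 ≤ N := by
    calc 8 = 2 ^ 2 * 2 := by norm_num
      _ ≤ 2 ^ t * p := Nat.mul_le_mul (Nat.pow_le_pow_right (by norm_num) ht2) (by omega)
  have hnn : n + 1 = N := by omega
  have haN : a < N := by omega
  set w : Fin n → ℝ := fun k =>
    2 / (N : ℝ) * (Real.sin (((a * (k.val + 1) : ℕ) : ℝ) * π / (N : ℝ))) ^ 2 with hwdef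
  have hw0 : ∀ k, 0 ≤ w k := by
    intro k
    rw [hwdef]
    positivity
  have hwsum : ∑ k, w k = 1 := weight_sum n N a hnn ha haN
  have hw1 : ∀ k, w k ≤ 1 := by
    intro k
    rw [← hwsum]
    exact Finset.single_le_sum (fun j _ => hw0 j) (Finset.mem_univ k)
  obtain ⟨r1, hr1, hsum1⟩ := chain t p ht2 hp hp' a ha haN hndvd 1 (Or.inl rfl)
  obtain ⟨r2, hr2, hsum2⟩ := chain t p ht2 hp hp' a ha haN hndvd 2 (Or.inr rfl)
  rw [← hNdef] at hr1 hsum1 hr2 hsum2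
  set idx1 : Fin p → Fin n := fun j => ⟨r1 j.val - 1, by
    have h := hr1 j.val j.isLt; omega⟩ with hidx1
  set idx2 : Fin p → Fin n := fun j => ⟨r2 j.val - 1, by
    have h := hr2 j.val j.isLt; omega⟩ with hidx2
  have hidx1v : ∀ j : Fin p, (idx1 j).val + 1 = r1 j.val := by
    intro j
    have h := hr1 j.val j.isLt
    rw [hidx1]
    simp only
    omega
  have hidx2v : ∀ j : Fin p, (idx2 j).val + 1 = r2 j.val := by
    intro j
    have h := hr2 j.val j.isLt
    rw [hidx2]
    simp only
    omega
  have hwpos1 : ∀ j : Fin p, 0 < w (idx1 j) := by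
    intro j
    have h := hr1 j.val j.isLt
    rw [hwdef]
    simp only
    have hs : Real.sin (((a * ((idx1 j).val + 1) : ℕ) : ℝ) * π / (N : ℝ)) ≠ 0 := by
      rw [hidx1v j]
      exact sin_ne_zero_of_not_dvd N (a * r1 j.val) (by omega) h.2.2.1
    have hsq : 0 < (Real.sin (((a * ((idx1 j).val + 1) : ℕ) : ℝ) * π / (N : ℝ))) ^ 2 :=
      pow_two_pos_of_ne_zero hs
    have hN0 : (0:ℝ) < 2 / (N : ℝ) := by positivity
    exact mul_pos hN0 hsq
  have hwpos2 : ∀ j : Fin p, 0 < w (idx2 j) := by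
    intro j
    have h := hr2 j.val j.isLt
    rw [hwdef]
    simp only
    have hs : Real.sin (((a * ((idx2 j).val + 1) : ℕ) : ℝ) * π / (N : ℝ)) ≠ 0 := by
      rw [hidx2v j]
      exact sin_ne_zero_of_not_dvd N (a * r2 j.val) (by omega) h.2.2.1
    have hsq : 0 < (Real.sin (((a * ((idx2 j).val + 1) : ℕ) : ℝ) * π / (N : ℝ))) ^ 2 :=
      pow_two_pos_of_ne_zero hs
    have hN0 : (0:ℝ) < 2 / (N : ℝ) := by positivity
    exact mul_pos hN0 hsq
  have hpne : (Finset.univ : Finset (Fin p)).Nonempty :=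
    ⟨⟨0, by omega⟩, Finset.mem_univ _⟩
  set c : ℝ := Finset.univ.inf' hpne (fun j => min (w (idx1 j)) (w (idx2 j))) with hcdef
  have hc0 : 0 < c := by
    rw [hcdef]
    exact (Finset.lt_inf'_iff hpne).2 (fun j _ => lt_min (hwpos1 j) (hwpos2 j))
  have hcle1 : ∀ j : Fin p, c ≤ w (idx1 j) := by
    intro j
    calc c ≤ min (w (idx1 j)) (w (idx2 j)) := by
          rw [hcdef]; exact Finset.inf'_le _ (Finset.mem_univ j)
      _ ≤ w (idx1 j) := min_le_left _ _
  have hcle2 : ∀ j : Fin p, c ≤ w (idx2 j) := by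
    intro j
    calc c ≤ min (w (idx1 j)) (w (idx2 j)) := by
          rw [hcdef]; exact Finset.inf'_le _ (Finset.mem_univ j)
      _ ≤ w (idx2 j) := min_le_right _ _
  have hc1 : c ≤ 1 := le_trans (hcle1 ⟨0, by omega⟩) (hw1 _)
  have hppos : (0:ℝ) < (p:ℝ) := by positivity
  have hpr : (3:ℝ) ≤ (p:ℝ) := by exact_mod_cast hp3
  set ε : ℝ := c / (4 * (p:ℝ)^2) with hεdef
  have hε0 : 0 < ε := by rw [hεdef]; positivity
  have hε1 : ε < 1 := by
    rw [hεdef, div_lt_one (by positivity)]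
    nlinarith
  obtain ⟨τ, hτ⟩ := hP ε hε0
  rw [key n N a hnn ha haN ⟨a - 1, by omega⟩ ⟨n + 1 - a - 1, by omega⟩
    (by show a - 1 + 1 = a; omega) (by show n + 1 - a - 1 + 1 = N - a; omega) τ] at hτ
  set u : Fin n → ℂ := fun k => (-1 : ℂ) ^ (k.val) * Complex.exp (Complex.I *
    (((2 * τ * Real.cos (((k.val + 1 : ℕ) : ℝ) * π / (N : ℝ)) : ℝ)) : ℂ)) with hudef
  have hu : ∀ k, ‖u k‖ = 1 := by
    intro k
    rw [hudef]
    simp only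
    rw [norm_mul, norm_pow]
    rw [show Complex.I * (((2 * τ * Real.cos (((k.val + 1 : ℕ) : ℝ) * π / (N : ℝ)) : ℝ)) : ℂ)
      = (((2 * τ * Real.cos (((k.val + 1 : ℕ) : ℝ) * π / (N : ℝ)) : ℝ)) : ℂ) * Complex.I from
      mul_comm _ _, Complex.norm_exp_ofReal_mul_I]
    simp
  obtain ⟨ζ, hζ1, hζ2⟩ := align w hw0 hwsum u hu hε0 hε1 hτ
  set D : ℝ := Real.sqrt (2 * ε / c) with hDdef
  have hD0 : 0 ≤ D := Real.sqrt_nonneg _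
  have hub : ∀ k : Fin n, c ≤ w k → ‖u k - ζ‖ ≤ D := by
    intro k hck
    have h1 := hζ2 k
    have h2 : (‖u k - ζ‖) ^ 2 ≤ 2 * ε / c := by
      rw [le_div_iff₀ hc0]
      nlinarith [norm_nonneg (u k - ζ)]
    calc ‖u k - ζ‖
        = Real.sqrt ((‖u k - ζ‖) ^ 2) :=
          (Real.sqrt_sq (norm_nonneg _)).symm
      _ ≤ D := by rw [hDdef]; exact Real.sqrt_le_sqrt h2
  -- chain product computations
  have hterm1 : ∀ j : Fin p, u (idx1 j) = Complex.exp (Complex.I *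
      (((2 * τ * Real.cos ((r1 j.val : ℝ) * π / (N : ℝ)) : ℝ)) : ℂ)) := by
    intro j
    have h := hr1 j.val j.isLt
    have hv := hidx1v j
    rw [hudef]
    simp only
    rw [hv]
    have heven : Even ((idx1 j).val) := by
      refine Nat.even_iff.2 ?_
      have := h.2.2.2
      omega
    rw [heven.neg_one_pow, one_mul]
  have hterm2 : ∀ j : Fin p, u (idx2 j) = (-1) * Complex.exp (Complex.I *
      (((2 * τ * Real.cos ((r2 j.val : ℝ) * π / (N : ℝ)) : ℝ)) : ℂ)) := by
    intro j
    have h := hr2 j.val j.isLt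
    have hv := hidx2v j
    rw [hudef]
    simp only
    rw [hv]
    have hodd : Odd ((idx2 j).val) := by
      refine Nat.odd_iff.2 ?_
      have := h.2.2.2
      omega
    rw [hodd.neg_one_pow]
  have hexp1 : ∑ j : Fin p, Complex.I *
      (((2 * τ * Real.cos ((r1 j.val : ℝ) * π / (N : ℝ)) : ℝ)) : ℂ) = 0 := by
    rw [← Finset.mul_sum]
    have hcast : ∑ j : Fin p, (((2 * τ * Real.cos ((r1 j.val : ℝ) * π / (N : ℝ)) : ℝ)) : ℂ)
        = ((∑ j ∈ Finset.range p, 2 * τ * Real.cos ((r1 j : ℝ) * π / (N : ℝ)) : ℝ) : ℂ) := by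
      rw [Complex.ofReal_sum]
      exact Fin.sum_univ_eq_sum_range
        (fun j => (((2 * τ * Real.cos ((r1 j : ℝ) * π / (N : ℝ)) : ℝ)) : ℂ)) p
    rw [hcast, show ∑ j ∈ Finset.range p, 2 * τ * Real.cos ((r1 j : ℝ) * π / (N : ℝ))
      = 2 * τ * ∑ j ∈ Finset.range p, Real.cos ((r1 j : ℝ) * π / (N : ℝ)) from
      (Finset.mul_sum _ _ _).symm, hsum1]
    simp
  have hexp2 : ∑ j : Fin p, Complex.I *
      (((2 * τ * Real.cos ((r2 j.val : ℝ) * π / (N : ℝ)) : ℝ)) : ℂ) = 0 := by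
    rw [← Finset.mul_sum]
    have hcast : ∑ j : Fin p, (((2 * τ * Real.cos ((r2 j.val : ℝ) * π / (N : ℝ)) : ℝ)) : ℂ)
        = ((∑ j ∈ Finset.range p, 2 * τ * Real.cos ((r2 j : ℝ) * π / (N : ℝ)) : ℝ) : ℂ) := by
      rw [Complex.ofReal_sum]
      exact Fin.sum_univ_eq_sum_range
        (fun j => (((2 * τ * Real.cos ((r2 j : ℝ) * π / (N : ℝ)) : ℝ)) : ℂ)) p
    rw [hcast, show ∑ j ∈ Finset.range p, 2 * τ * Real.cos ((r2 j : ℝ) * π / (N : ℝ))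
      = 2 * τ * ∑ j ∈ Finset.range p, Real.cos ((r2 j : ℝ) * π / (N : ℝ)) from
      (Finset.mul_sum _ _ _).symm, hsum2]
    simp
  have hP1 : (∏ j : Fin p, u (idx1 j)) = 1 := by
    rw [Finset.prod_congr rfl (fun j _ => hterm1 j), ← Complex.exp_sum, hexp1,
      Complex.exp_zero]
  have hP2 : (∏ j : Fin p, u (idx2 j)) = -1 := by
    rw [Finset.prod_congr rfl (fun j _ => hterm2 j), Finset.prod_mul_distrib,
      Finset.prod_const, ← Complex.exp_sum, hexp2, Complex.exp_zero,
      Finset.card_univ, Fintype.card_fin, hp'.neg_one_pow]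
    ring
  -- distance bounds
  have hb1 : ‖(1 : ℂ) - ζ ^ p‖ ≤ (p : ℝ) * D := by
    have hpd := prod_dist Finset.univ (fun j : Fin p => u (idx1 j)) (fun _ => ζ)
      (fun j _ => le_of_eq (hu (idx1 j))) (fun j _ => le_of_eq hζ1)
    rw [Finset.prod_const, Finset.card_univ, Fintype.card_fin, hP1] at hpd
    refine le_trans hpd ?_
    calc ∑ j : Fin p, ‖u (idx1 j) - ζ‖
        ≤ ∑ _j : Fin p, D := Finset.sum_le_sum (fun j _ => hub _ (hcle1 j))
      _ = (p : ℝ) * D := by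
          rw [Finset.sum_const, Finset.card_univ, Fintype.card_fin, nsmul_eq_mul]
  have hb2 : ‖(-1 : ℂ) - ζ ^ p‖ ≤ (p : ℝ) * D := by
    have hpd := prod_dist Finset.univ (fun j : Fin p => u (idx2 j)) (fun _ => ζ)
      (fun j _ => le_of_eq (hu (idx2 j))) (fun j _ => le_of_eq hζ1)
    rw [Finset.prod_const, Finset.card_univ, Fintype.card_fin, hP2] at hpd
    refine le_trans hpd ?_
    calc ∑ j : Fin p, ‖u (idx2 j) - ζ‖
        ≤ ∑ _j : Fin p, D := Finset.sum_le_sum (fun j _ => hub _ (hcle2 j))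
      _ = (p : ℝ) * D := by
          rw [Finset.sum_const, Finset.card_univ, Fintype.card_fin, nsmul_eq_mul]
  have htri : (2 : ℝ) ≤ ‖(1 : ℂ) - ζ ^ p‖ + ‖ζ ^ p - (-1)‖ := by
    have h2 := norm_sub_le_norm_sub_add_norm_sub (1 : ℂ) (ζ ^ p) (-1)
    have : ‖(1 : ℂ) - (-1)‖ = 2 := by norm_num
    linarith
  have hflip : ‖ζ ^ p - (-1)‖ = ‖(-1 : ℂ) - ζ ^ p‖ := by
    rw [show (ζ ^ p - (-1 : ℂ)) = -((-1 : ℂ) - ζ ^ p) by ring, norm_neg]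
  have h2le : (2 : ℝ) ≤ 2 * ((p : ℝ) * D) := by
    rw [hflip] at htri
    linarith
  have hD2' : ((p : ℝ) * D) ^ 2 = 1 / 2 := by
    rw [mul_pow, hDdef, Real.sq_sqrt (by positivity), hεdef]
    field_simp
    ring
  nlinarith [sq_nonneg ((p : ℝ) * D - 1), hD2', h2le, hD0]
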